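/- Let d ≥ 1, a ∈ [0,1], and suppose there exists a bounded function f : ℤ → ℝ such that ((u-1)^d · f)(m) ∈ {a, a-1} for all m ∈ ℤ, where ((u-1)^d · f)(m) = ∑_{i=0}^d (-1)^{d-i} binom(d,i) f(m+i). Then there exists a balanced word w ∈ {0,1}^{ℤ^d} with density a. -/

import Mathlib

open Finset Filter


lemma tel_aux (k : ℤ → ℝ) (c A : ℤ) (B : ℤ) (hAB : A ≤ B) :
    ∑ x ∈ Finset.Ico A B, fwdDiff 1 k (c + x) = k (c + B) - k (c + A) := by
  refine Int.le_induction (motive := fun B _ =>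
    ∑ x ∈ Finset.Ico A B, fwdDiff 1 k (c + x) = k (c + B) - k (c + A)) ?_ ?_ B hAB
  · simp
  · intro B hB ih
    have hins : Finset.Ico A (B + 1) = insert B (Finset.Ico A B) := by
      ext x; simp; omega
    rw [hins, Finset.sum_insert (by simp), ih]
    simp only [fwdDiff]
    rw [show c + (B + 1) = c + B + 1 by ring]
    ring

lemma sum_piFinset_cons {n : ℕ} (S : Fin (n+1) → Finset ℤ) (F : (Fin (n+1) → ℤ) → ℝ) :
    ∑ x ∈ Fintype.piFinset S, F x
      = ∑ x₀ ∈ S 0, ∑ y ∈ Fintype.piFinset (Fin.tail S), F (Fin.cons x₀ y) := by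
  have h := Finset.filter_piFinset_eq_map_consEquiv S (fun _ => True)
  simp only [Finset.filter_true] at h
  rw [h, Finset.sum_map, Finset.sum_product]
  rfl

lemma sum_fwdDiff_iter_bound (C : ℝ) : ∀ (n : ℕ) (h : ℤ → ℝ), (∀ m, |h m| ≤ C) →
    ∀ (c : ℤ) (A B : Fin n → ℤ),
    |∑ x ∈ Fintype.piFinset (fun i => Finset.Ico (A i) (B i)),
        (fwdDiff 1)^[n] h (c + ∑ i, x i)| ≤ 2 ^ n * C := by
  intro n
  induction n with
  | zero =>
      intro h hC c A B
      have hpi : Fintype.piFinset (fun i : Fin 0 => Finset.Ico (A i) (B i))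
          = {(fun i => i.elim0)} := by
        ext x
        simp only [Fintype.mem_piFinset, Finset.mem_singleton]
        constructor
        · intro _; funext i; exact i.elim0
        · intro _ i; exact i.elim0
      rw [hpi]
      simpa using hC c
  | succ n ih =>
      intro h hC c A B
      have hC0 : 0 ≤ C := le_trans (abs_nonneg _) (hC 0)
      rw [sum_piFinset_cons]
      by_cases hAB : A 0 ≤ B 0
      · rw [Finset.sum_comm]
        have hsum : ∀ y : Fin n → ℤ,
            ∑ x₀ ∈ Finset.Ico (A 0) (B 0), (fwdDiff 1)^[n+1] h (c + ∑ i, Fin.cons x₀ y i)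
              = (fwdDiff 1)^[n] h ((c + B 0) + ∑ i, y i)
                - (fwdDiff 1)^[n] h ((c + A 0) + ∑ i, y i) := by
          intro y
          have : ∀ x₀ : ℤ, c + ∑ i, Fin.cons x₀ y i = (c + ∑ i, y i) + x₀ := by
            intro x₀; rw [Fin.sum_cons]; ring
          simp only [this]
          rw [Function.iterate_succ_apply' (fwdDiff 1) n h]
          rw [tel_aux ((fwdDiff 1)^[n] h) (c + ∑ i, y i) (A 0) (B 0) hAB]
          ring_nf
        simp only [hsum]
        rw [Finset.sum_sub_distrib]
        have h1 := ih h hC (c + B 0) (fun i => A i.succ) (fun i => B i.succ)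
        have h2 := ih h hC (c + A 0) (fun i => A i.succ) (fun i => B i.succ)
        have htail : (Fin.tail fun i => Finset.Ico (A i) (B i))
            = fun i : Fin n => Finset.Ico (A i.succ) (B i.succ) := rfl
        rw [htail]
        calc _ ≤ |∑ y ∈ Fintype.piFinset (fun i : Fin n => Finset.Ico (A i.succ) (B i.succ)),
                    (fwdDiff 1)^[n] h ((c + B 0) + ∑ i, y i)|
                 + |∑ y ∈ Fintype.piFinset (fun i : Fin n => Finset.Ico (A i.succ) (B i.succ)),
                    (fwdDiff 1)^[n] h ((c + A 0) + ∑ i, y i)| := abs_sub _ _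
          _ ≤ 2 ^ n * C + 2 ^ n * C := add_le_add h1 h2
          _ = 2 ^ (n + 1) * C := by ring
      · have : Finset.Ico (A 0) (B 0) = ∅ := Finset.Ico_eq_empty (fun hlt => hAB (le_of_lt hlt))
        rw [this]
        simp
        positivity

theorem balanced_word_of_one_dim_function
    (d : ℕ) (hd : 1 ≤ d) (a : ℝ) (ha : a ∈ Set.Icc (0:ℝ) 1)
    (f : ℤ → ℝ) (hb : ∃ C, ∀ m : ℤ, |f m| ≤ C)
    (hf : ∀ m : ℤ,
      (∑ i ∈ Finset.range (d + 1), (-1 : ℝ) ^ (d - i) * (d.choose i : ℝ) * f (m + i)) = a ∨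
      (∑ i ∈ Finset.range (d + 1), (-1 : ℝ) ^ (d - i) * (d.choose i : ℝ) * f (m + i)) = a - 1) :
    ∃ w : (Fin d → ℤ) → ℕ,
      (∀ g, w g = 0 ∨ w g = 1) ∧
      (∃ M : ℝ, 0 < M ∧ ∀ A B t : Fin d → ℤ,
        |(((Fintype.piFinset (fun i => Finset.Ico (A i) (B i))).filter
            (fun g => w g = 1)).card : ℝ) -
          (((Fintype.piFinset (fun i => Finset.Ico (A i + t i) (B i + t i))).filter
            (fun g => w g = 1)).card : ℝ)| ≤ M) ∧
      (∀ A B : ℕ → (Fin d → ℤ),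
        Tendsto (fun n => (Fintype.piFinset (fun i => Finset.Ico (A n i) (B n i))).card)
          atTop atTop →
        Tendsto (fun n =>
            ((((Fintype.piFinset (fun i => Finset.Ico (A n i) (B n i))).filter
                (fun g => w g = 1)).card : ℝ) /
              ((Fintype.piFinset (fun i => Finset.Ico (A n i) (B n i))).card : ℝ)))
          atTop (nhds a)) := by
  classical
  obtain ⟨C, hC⟩ := hb
  have hC0 : 0 ≤ C := le_trans (abs_nonneg _) (hC 0)
  set g : ℤ → ℝ := (fwdDiff 1)^[d] f with hgdef
  have hg : ∀ m, g m = a ∨ g m = a - 1 := by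
    intro m
    have h1 := fwdDiff_iter_eq_sum_shift (1 : ℤ) f d m
    have h2 : g m = ∑ i ∈ Finset.range (d + 1),
        (-1 : ℝ) ^ (d - i) * (d.choose i : ℝ) * f (m + i) := by
      rw [hgdef, h1]
      apply Finset.sum_congr rfl
      intro i _
      push_cast [zsmul_eq_mul]
      ring_nf
    rw [h2]; exact hf m
  set w : (Fin d → ℤ) → ℕ := fun x => if g (∑ i, x i) = a - 1 then 1 else 0 with hwdef
  have hcount : ∀ A B : Fin d → ℤ,
      ((((Fintype.piFinset (fun i => Finset.Ico (A i) (B i))).filter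
          (fun x => w x = 1)).card : ℝ))
        = a * ((Fintype.piFinset (fun i => Finset.Ico (A i) (B i))).card : ℝ)
          - ∑ x ∈ Fintype.piFinset (fun i => Finset.Ico (A i) (B i)), g (∑ i, x i) := by
    intro A B
    rw [Finset.card_filter]
    push_cast
    have hstep : ∀ x ∈ Fintype.piFinset (fun i => Finset.Ico (A i) (B i)),
        (if w x = 1 then (1:ℝ) else 0) = a - g (∑ i, x i) := by
      intro x _
      by_cases h : g (∑ i, x i) = a - 1
      · have : w x = 1 := by simp [hwdef, h]
        rw [if_pos this, h]; ring
      · have hga : g (∑ i, x i) = a := (hg _).resolve_right h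
        have : w x ≠ 1 := by simp [hwdef, h]
        rw [if_neg this, hga]; ring
    rw [Finset.sum_congr rfl hstep, Finset.sum_sub_distrib, Finset.sum_const, nsmul_eq_mul]
    ring
  have hkey : ∀ A B : Fin d → ℤ,
      |((((Fintype.piFinset (fun i => Finset.Ico (A i) (B i))).filter
          (fun x => w x = 1)).card : ℝ))
        - a * ((Fintype.piFinset (fun i => Finset.Ico (A i) (B i))).card : ℝ)| ≤ 2 ^ d * C := by
    intro A B
    rw [hcount A B]
    have hb := sum_fwdDiff_iter_bound C d f hC 0 A B
    simp only [zero_add] at hb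
    rw [show a * ((Fintype.piFinset (fun i => Finset.Ico (A i) (B i))).card : ℝ)
          - (∑ x ∈ Fintype.piFinset (fun i => Finset.Ico (A i) (B i)), g (∑ i, x i))
          - a * ((Fintype.piFinset (fun i => Finset.Ico (A i) (B i))).card : ℝ)
        = -(∑ x ∈ Fintype.piFinset (fun i => Finset.Ico (A i) (B i)), g (∑ i, x i)) by ring]
    rw [abs_neg]
    exact hb
  refine ⟨w, ?_, ?_, ?_⟩
  · intro x; by_cases h : g (∑ i, x i) = a - 1 <;> simp [hwdef, h]
  · refine ⟨2 * (2 ^ d * C) + 1, by positivity, ?_⟩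
    intro A B t
    have hcardeq : ((Fintype.piFinset (fun i => Finset.Ico (A i + t i) (B i + t i))).card : ℝ)
        = ((Fintype.piFinset (fun i => Finset.Ico (A i) (B i))).card : ℝ) := by
      rw [Fintype.card_piFinset, Fintype.card_piFinset]
      congr 1
      apply Finset.prod_congr rfl
      intro i _
      rw [Int.card_Ico, Int.card_Ico]
      congr 1
      ring
    have tri : ∀ x y c : ℝ, |x - y| ≤ |x - c| + |y - c| := by
      intro x y c
      calc |x - y| ≤ |x - c| + |c - y| := abs_sub_le x c y
        _ = |x - c| + |y - c| := by rw [abs_sub_comm c y]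
    have e1 := hkey A B
    have e2 := hkey (fun i => A i + t i) (fun i => B i + t i)
    rw [hcardeq] at e2
    calc |(((Fintype.piFinset (fun i => Finset.Ico (A i) (B i))).filter
            (fun x => w x = 1)).card : ℝ) -
          (((Fintype.piFinset (fun i => Finset.Ico (A i + t i) (B i + t i))).filter
            (fun x => w x = 1)).card : ℝ)|
        ≤ |(((Fintype.piFinset (fun i => Finset.Ico (A i) (B i))).filter
            (fun x => w x = 1)).card : ℝ)
            - a * ((Fintype.piFinset (fun i => Finset.Ico (A i) (B i))).card : ℝ)|
          + |(((Fintype.piFinset (fun i => Finset.Ico (A i + t i) (B i + t i))).filter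
            (fun x => w x = 1)).card : ℝ)
            - a * ((Fintype.piFinset (fun i => Finset.Ico (A i) (B i))).card : ℝ)| := by
          exact tri _ _ _
      _ ≤ 2 ^ d * C + 2 ^ d * C := add_le_add e1 e2
      _ ≤ 2 * (2 ^ d * C) + 1 := by linarith
  · intro A B hT
    set cnt : ℕ → ℝ := fun n =>
      (((Fintype.piFinset (fun i => Finset.Ico (A n i) (B n i))).filter
          (fun x => w x = 1)).card : ℝ) with hcnt
    set crd : ℕ → ℝ := fun n =>
      ((Fintype.piFinset (fun i => Finset.Ico (A n i) (B n i))).card : ℝ) with hcrd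
    have h1 : Tendsto crd atTop atTop := tendsto_natCast_atTop_atTop.comp hT
    have h2 : Tendsto (fun n => 2 ^ d * C / crd n) atTop (nhds 0) :=
      Tendsto.div_atTop tendsto_const_nhds h1
    have hev : ∀ᶠ n in atTop, ‖cnt n / crd n - a‖ ≤ 2 ^ d * C / crd n := by
      filter_upwards [h1.eventually_ge_atTop 1] with n hn
      have hpos : (0:ℝ) < crd n := lt_of_lt_of_le one_pos hn
      have hne : crd n ≠ 0 := ne_of_gt hpos
      have : cnt n / crd n - a = (cnt n - a * crd n) / crd n := by
        field_simp
      rw [Real.norm_eq_abs, this, abs_div, abs_of_pos hpos, div_le_div_iff_of_pos_right hpos]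
      exact hkey (A n) (B n)
    have := squeeze_zero_norm' hev h2
    exact tendsto_sub_nhds_zero_iff.mp this
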